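/- For every even ℓ, every k ≥ 1 with 8k ≤ ℓ < 16k, and every x with 0 < x ≤ 1, one has (−1)^{ℓ/2} · E_{4k}^{(ℓ)}(x) < 0. In particular, for a fixed even cutoff ℓ and fixed x ∈ (0,1], all the truncation errors E_{4k}^{(ℓ)}(x) over indices k with 8k ≤ ℓ < 16k have the same sign (−1)^{ℓ/2+1}, independent of k. -/

import Mathlib

open Polynomial

/-- The polynomial `P_k = ((3/2)X² − (1/2)X⁴)^k`, whose coefficients are the
total weight-`w` Pauli-path coefficients of one layer of majority-voting gates
applied to `O_k = ∏_{i=1}^k Z_{3i−2}` with initial state `|0…0⟩`. -/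
noncomputable def P (k : ℕ) : Polynomial ℝ :=
  (C (3/2) * X ^ 2 - C (1/2) * X ^ 4) ^ k

/-- `F k w` is the coefficient of `X^w` in `P_k`. -/
noncomputable def F (k w : ℕ) : ℝ := (P k).coeff w

/-- `E k ℓ x = ∑_{w > ℓ} F_w(k) x^w`: the truncation error of the Pauli-path
method with cutoff `ℓ` at `x = 1 − p` (the sum is finite since `F_w(k) = 0`
for `w > 4k`). -/
noncomputable def E (k ℓ : ℕ) (x : ℝ) : ℝ :=
  ∑ w ∈ Finset.Ioc ℓ (4 * k), F k w * x ^ w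

/-- Tail of the binomial expansion of `(a - t)^n`, from index `m` on. -/
noncomputable def S (n m : ℕ) (a t : ℝ) : ℝ :=
  ∑ j ∈ Finset.Icc m n, (n.choose j : ℝ) * a ^ (n - j) * (-1) ^ j * t ^ j

lemma S_zero_eq (n m : ℕ) (a : ℝ) (hm : 1 ≤ m) : S n m a 0 = 0 := by
  unfold S
  apply Finset.sum_eq_zero
  intro j hj
  rw [Finset.mem_Icc] at hj
  rw [zero_pow (by omega), mul_zero]

lemma S_base (n : ℕ) (a t : ℝ) : S n 0 a t = (a - t) ^ n := by
  unfold S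
  rw [show a - t = -t + a by ring, add_pow]
  rw [show Finset.Icc 0 n = Finset.range (n+1) by
    ext j; simp [Nat.lt_succ_iff]]
  apply Finset.sum_congr rfl
  intro j hj
  ring

lemma S_hasDerivAt (n m : ℕ) (a t : ℝ) (h : m + 1 ≤ n) :
    HasDerivAt (fun t => S n (m+1) a t) (-(n:ℝ) * S (n-1) m a t) t := by
  have hd : HasDerivAt (fun t => S n (m+1) a t)
      (∑ j ∈ Finset.Icc (m+1) n, (n.choose j : ℝ) * a ^ (n - j) * (-1) ^ j * (j * t ^ (j-1))) t := by
    unfold S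
    apply HasDerivAt.fun_sum
    intro j hj
    exact (hasDerivAt_pow j t).const_mul _
  convert hd using 1
  have hmap : Finset.Icc (m+1) n = (Finset.Icc m (n-1)).map ⟨(· + 1), add_left_injective 1⟩ := by
    ext j
    simp only [Finset.mem_Icc, Finset.mem_map, Function.Embedding.coeFn_mk]
    constructor
    · intro hj; exact ⟨j - 1, by omega, by omega⟩
    · rintro ⟨i, hi, rfl⟩; omega
  rw [hmap, Finset.sum_map]
  unfold S
  rw [Finset.mul_sum]
  apply Finset.sum_congr rfl
  intro i hi
  rw [Finset.mem_Icc] at hi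
  simp only [Function.Embedding.coeFn_mk]
  have hnat : n.choose (i+1) * (i+1) = n * ((n-1).choose i) := by
    have := Nat.add_one_mul_choose_eq (n-1) i
    rw [Nat.sub_add_cancel (by omega)] at this
    exact this.symm
  have hc : ((n.choose (i+1)) : ℝ) * ((i:ℝ)+1) = (n : ℝ) * ((n-1).choose i : ℝ) := by
    exact_mod_cast hnat
  have he : n - (i+1) = (n-1) - i := by omega
  rw [he]
  rw [pow_succ (-1 : ℝ) i, Nat.add_sub_cancel]
  push_cast
  linear_combination (a ^ (n-1-i) * (-1 : ℝ) ^ i * t ^ i) * hc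

lemma S_pos (m : ℕ) : ∀ (n : ℕ) (a t : ℝ), m ≤ n → 0 < t → t < a →
    0 < (-1 : ℝ) ^ m * S n m a t := by
  induction m with
  | zero =>
    intro n a t _ ht hta
    rw [pow_zero, one_mul, S_base]
    have : 0 < a - t := by linarith
    positivity
  | succ m ih =>
    intro n a t hmn ht hta
    set f : ℝ → ℝ := fun s => (-1:ℝ)^(m+1) * S n (m+1) a s with hf
    have hderiv : ∀ s : ℝ, HasDerivAt f ((-1:ℝ)^(m+1) * (-(n:ℝ) * S (n-1) m a s)) s :=
      fun s => (S_hasDerivAt n m a s hmn).const_mul _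
    have hmono : StrictMonoOn f (Set.Icc 0 a) := by
      apply strictMonoOn_of_deriv_pos (convex_Icc 0 a)
      · exact fun s _ => (hderiv s).continuousAt.continuousWithinAt
      · intro s hs
        rw [interior_Icc] at hs
        rw [(hderiv s).deriv]
        have hI := ih (n-1) a s (by omega) hs.1 hs.2
        have heq : (-1:ℝ)^(m+1) * (-(n:ℝ) * S (n-1) m a s)
            = (n : ℝ) * ((-1:ℝ)^m * S (n-1) m a s) := by rw [pow_succ]; ring
        rw [heq]
        have hn : 0 < (n : ℝ) := by exact_mod_cast Nat.lt_of_lt_of_le (Nat.zero_lt_succ m) hmn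
        exact mul_pos hn hI
    have h0 : f 0 = 0 := by
      simp [hf, S_zero_eq n (m+1) a (Nat.le_add_left 1 m)]
    have := hmono (Set.mem_Icc.2 ⟨le_refl 0, le_of_lt (lt_trans ht hta)⟩)
      (Set.mem_Icc.2 ⟨le_of_lt ht, le_of_lt hta⟩) ht
    rw [h0] at this
    exact this

lemma P_eq (n : ℕ) : P n = ∑ j ∈ Finset.range (n+1),
    C ((n.choose j : ℝ) * (3/2)^(n-j) * (-1)^j * (1/2)^j) * X^(2*n + 2*j) := by
  unfold P
  rw [sub_eq_add_neg, add_comm, add_pow]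
  apply Finset.sum_congr rfl
  intro j hj
  rw [Finset.mem_range, Nat.lt_succ_iff] at hj
  rw [show 2*n + 2*j = 4*j + 2*(n-j) by omega]
  rw [pow_add]
  simp only [C_mul, C_pow, C_eq_natCast, map_neg, map_pow, map_one, map_ofNat]
  ring

lemma E_eq (k ℓ : ℕ) (hℓ : Even ℓ) (h1 : 8 * k ≤ ℓ) (x : ℝ) :
    E (4 * k) ℓ x = x ^ (8 * k) * S (4 * k) (ℓ / 2 + 1 - 4 * k) (3/2) (x^2/2) := by
  have hcoeff : ∀ w, F (4*k) w = ∑ j ∈ Finset.range (4*k+1),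
      (((4*k).choose j : ℝ) * (3/2)^(4*k-j) * (-1)^j * (1/2)^j)
        * (if w = 2*(4*k)+2*j then 1 else 0) := by
    intro w
    rw [F, P_eq, finset_sum_coeff]
    apply Finset.sum_congr rfl
    intro j _
    rw [coeff_C_mul, coeff_X_pow]
  unfold E
  simp only [hcoeff, Finset.sum_mul]
  rw [Finset.sum_comm]
  simp only [ite_mul, one_mul, zero_mul, mul_ite, mul_one, mul_zero,
    Finset.sum_ite_eq', Finset.sum_ite_eq]
  rw [← Finset.sum_filter]
  have hfil : Finset.filter (fun j => 2*(4*k)+2*j ∈ Finset.Ioc ℓ (4*(4*k)))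
      (Finset.range (4*k+1)) = Finset.Icc (ℓ / 2 + 1 - 4 * k) (4*k) := by
    obtain ⟨c, rfl⟩ := hℓ
    ext j
    simp only [Finset.mem_filter, Finset.mem_range, Finset.mem_Ioc, Finset.mem_Icc]
    omega
  rw [hfil]
  unfold S
  rw [Finset.mul_sum]
  apply Finset.sum_congr rfl
  intro j hj
  rw [show 2*(4*k)+2*j = 8*k + 2*j by ring, pow_add, pow_mul]
  ring

theorem truncation_error_sign_O4k (ℓ : ℕ) (hℓ : Even ℓ) (k : ℕ) (hk : 1 ≤ k)
    (h1 : 8 * k ≤ ℓ) (h2 : ℓ < 16 * k) (x : ℝ) (hx0 : 0 < x) (hx1 : x ≤ 1) :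
    ((-1 : ℝ)) ^ (ℓ / 2) * E (4 * k) ℓ x < 0 := by
  obtain ⟨c, hc⟩ := hℓ
  set d := c - 4 * k with hd
  have hc4 : c = 4 * k + d := by omega
  have hdiv : ℓ / 2 = c := by omega
  have hm : ℓ / 2 + 1 - 4 * k = d + 1 := by omega
  rw [E_eq k ℓ ⟨c, hc⟩ h1 x, hm, hdiv]
  have ht : 0 < x^2/2 := by positivity
  have ht2 : x^2/2 < 3/2 := by nlinarith
  have hmle : d + 1 ≤ 4 * k := by omega
  have hS := S_pos (d+1) (4*k) (3/2) (x^2/2) hmle ht ht2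
  have hS' : (-1:ℝ)^d * S (4*k) (d+1) (3/2) (x^2/2) < 0 := by
    rw [pow_succ] at hS
    nlinarith
  have hx8 : 0 < x ^ (8*k) := pow_pos hx0 _
  have hpow : (-1:ℝ)^c = (-1:ℝ)^d := by
    rw [hc4, pow_add, pow_mul]
    norm_num
  rw [hpow]
  calc (-1:ℝ)^d * (x ^ (8*k) * S (4*k) (d+1) (3/2) (x^2/2))
      = x ^ (8*k) * ((-1:ℝ)^d * S (4*k) (d+1) (3/2) (x^2/2)) := by ring
    _ < 0 := mul_neg_of_pos_of_neg hx8 hS'
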